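/- arXiv:2005.13051 — 4 statements merged into one kernel-verified Lean document; each statement's English description precedes it below -/
import Mathlib

section
/- Let G be a finite abelian group, a : G → ℝ≥0 with a(0) ≥ 1 (e.g., a(0) = 1), y : G → ℝ≥0, and j ≥ 1 an integer. Define R(i) = y(i) / (∑_{k ∈ G} a(k) * y(i - k)), with the convention 0/0 = 0. Then ∑_{i ∈ G} R(i) * y(i)^j ≥ (1 / ∑_{k ∈ G} a(k)) * ∑_{i ∈ G} y(i)^j. -/
theorem stmt_2 {G : Type*} [AddCommGroup G] [Fintype G]
    (a y : G → NNReal) (ha : 1 ≤ a 0) (j : ℕ) (hj : 1 ≤ j)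
    (R : G → NNReal) (hR : ∀ i, R i = y i / (∑ k : G, a k * y (i - k))) :
    (1 / ∑ k : G, a k) * ∑ i : G, y i ^ j ≤ ∑ i : G, R i * y i ^ j := by
  set A : NNReal := ∑ k : G, a k with hA
  set S : NNReal := ∑ i : G, y i ^ j with hS
  set T : NNReal := ∑ i : G, R i * y i ^ j with hT
  have hA1 : (1:NNReal) ≤ A := le_trans ha (Finset.single_le_sum (fun k _ => zero_le) (Finset.mem_univ 0))
  have hA0 : A ≠ 0 := fun h => by simp [h] at hA1
  set D : G → NNReal := fun i => ∑ k : G, a k * y (i - k) with hD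
  -- if D i = 0 then y i = 0
  have hDy : ∀ i, D i = 0 → y i = 0 := by
    intro i h
    have h0 : a 0 * y (i - 0) ≤ D i :=
      Finset.single_le_sum (f := fun k => a k * y (i - k)) (fun k _ => zero_le) (Finset.mem_univ 0)
    rw [h, nonpos_iff_eq_zero, mul_eq_zero] at h0
    rcases h0 with h0 | h0
    · exact absurd h0 (by intro hh; simp [hh] at ha)
    · simpa using h0
  -- rearrangement step: for each k, ∑ i, y i ^ (j-1) * y (i - k) ≤ S
  have hrearr : ∀ k : G, ∑ i : G, y i ^ (j - 1) * y (i - k) ≤ S := by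
    intro k
    have key : ∑ i : G, (y i : ℝ) ^ (j - 1) * (y (i - k) : ℝ) ≤ ∑ i : G, (y i : ℝ) ^ (j - 1) * (y i : ℝ) := by
      have hmono : Monovary (fun i => (y i : ℝ) ^ (j - 1)) (fun i => (y i : ℝ)) := by
        intro p q hpq
        exact pow_le_pow_left₀ (y p).coe_nonneg hpq.le _
      exact hmono.sum_mul_comp_perm_le_sum_mul (σ := Equiv.subRight k)
    have : ∑ i : G, y i ^ (j - 1) * y (i - k) ≤ ∑ i : G, y i ^ (j - 1) * y i := by
      rw [← NNReal.coe_le_coe]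
      push_cast
      exact key
    refine this.trans (le_of_eq ?_)
    rw [hS]
    congr 1
    ext i
    rw [← pow_succ, Nat.sub_add_cancel hj]
  -- ∑ g ≤ A * S where g i = y i ^ (j-1) * D i
  have hg : ∑ i : G, y i ^ (j - 1) * D i ≤ A * S := by
    calc ∑ i : G, y i ^ (j - 1) * D i
        = ∑ i : G, ∑ k : G, a k * (y i ^ (j - 1) * y (i - k)) := by
          refine Finset.sum_congr rfl fun i _ => ?_
          rw [show D i = ∑ k : G, a k * y (i - k) from rfl, Finset.mul_sum]
          exact Finset.sum_congr rfl fun k _ => by ring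
      _ = ∑ k : G, ∑ i : G, a k * (y i ^ (j - 1) * y (i - k)) := Finset.sum_comm
      _ = ∑ k : G, a k * ∑ i : G, y i ^ (j - 1) * y (i - k) := by
          exact Finset.sum_congr rfl fun k _ => (Finset.mul_sum _ _ _).symm
      _ ≤ ∑ k : G, a k * S := Finset.sum_le_sum fun k _ => mul_le_mul_right (hrearr k) _
      _ = A * S := by rw [hA, Finset.sum_mul]
  -- Cauchy-Schwarz
  have hCS : S ^ 2 ≤ T * (A * S) := by
    have := Finset.sum_sq_le_sum_mul_sum_of_sq_eq_mul (Finset.univ : Finset G)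
      (r := fun i => y i ^ j) (f := fun i => R i * y i ^ j) (g := fun i => y i ^ (j - 1) * D i)
      (fun i _ => zero_le) (fun i _ => zero_le) ?_
    · exact this.trans (mul_le_mul_right hg T)
    · intro i _
      by_cases hDi : D i = 0
      · have hy0 := hDy i hDi
        have hj2 : j ≠ 0 := by omega
        simp [hy0, hDi, zero_pow hj2]
      · have hRD : R i * D i = y i := by
          rw [hR i]; exact div_mul_cancel₀ _ hDi
        rw [show R i * y i ^ j * (y i ^ (j - 1) * D i)
              = (R i * D i) * (y i ^ j * y i ^ (j - 1)) by ring, hRD]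
        have hexp : j * 2 = 1 + (j + (j - 1)) := by omega
        rw [← pow_mul, hexp, pow_add, pow_one, pow_add]
  -- conclude
  have hST : S ≤ A * T := by
    rcases eq_or_ne S 0 with h | h
    · simp [h]
    · have : S * S ≤ (A * T) * S := by
        calc S * S = S ^ 2 := (sq S).symm
          _ ≤ T * (A * S) := hCS
          _ = (A * T) * S := by ring
      exact le_of_mul_le_mul_right this (zero_lt_iff.mpr h)
  calc (1 / A) * S ≤ (1 / A) * (A * T) := mul_le_mul_right hST _
    _ = T := by rw [← mul_assoc, one_div, inv_mul_cancel₀ hA0, one_mul]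
end

section
/- Let D > 0 and let (μ_k)_{k ≥ 0} be a sequence of nonnegative reals with μ₀ = 1 satisfying, for all integers k ≥ 1, D * (k+1) * μ_k ≤ ∑_{j=0}^{k-1} binomial(k+1, j) * μ_j. Then for every real c ≥ 0 with c * exp(c) < D and every m ∈ ℕ, the partial sum S_m = ∑_{j=0}^{m} c^j μ_j / j! satisfies S_m ≤ D / (D − c * exp(c)). -/
open Finset

theorem stmt_5 (D : ℝ) (hD : 0 < D) (μ : ℕ → ℝ) (hμ : ∀ k, 0 ≤ μ k) (h0 : μ 0 = 1)
    (hrec : ∀ k : ℕ, 1 ≤ k →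
      D * (k + 1) * μ k ≤ ∑ j ∈ Finset.range k, (Nat.choose (k + 1) j : ℝ) * μ j)
    (c : ℝ) (hc : 0 ≤ c) (hcD : c * Real.exp c < D) (m : ℕ) :
    ∑ j ∈ Finset.range (m + 1), c ^ j * μ j / (Nat.factorial j : ℝ) ≤
      D / (D - c * Real.exp c) := by
  set E : ℝ := c * Real.exp c with hE
  have hEnn : 0 ≤ E := mul_nonneg hc (Real.exp_pos c).le
  have hEpos : 0 < D - E := by linarith
  set f : ℕ → ℝ := fun j => c ^ j * μ j / (Nat.factorial j : ℝ) with hf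
  have hfnn : ∀ j, 0 ≤ f j := fun j =>
    div_nonneg (mul_nonneg (pow_nonneg hc j) (hμ j)) (Nat.cast_nonneg _)
  set S : ℝ := ∑ j ∈ Finset.range (m + 1), f j with hS
  have hSnn : 0 ≤ S := Finset.sum_nonneg fun j _ => hfnn j
  -- key step per k ≥ 1
  have step : ∀ k : ℕ, 1 ≤ k →
      D * f k ≤ ∑ j ∈ Finset.range k, c ^ k * μ j /
        ((Nat.factorial j : ℝ) * (Nat.factorial (k + 1 - j) : ℝ)) := by
    intro k hk
    have h1 := hrec k hk
    have hcp : (0:ℝ) ≤ c ^ k / (Nat.factorial (k+1) : ℝ) :=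
      div_nonneg (pow_nonneg hc k) (Nat.cast_nonneg _)
    have h2 := mul_le_mul_of_nonneg_right h1 hcp
    rw [Finset.sum_mul] at h2
    have hfk1 : (Nat.factorial (k+1) : ℝ) = (k+1) * (Nat.factorial k : ℝ) := by
      rw [Nat.factorial_succ]; push_cast; ring
    calc D * f k = D * (k+1) * μ k * (c ^ k / (Nat.factorial (k+1) : ℝ)) := by
          rw [hfk1]
          have hk0 : (Nat.factorial k : ℝ) ≠ 0 := by positivity
          have hk1 : (k:ℝ) + 1 ≠ 0 := by positivity
          simp only [hf]
          field_simp [hf]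
      _ ≤ ∑ j ∈ Finset.range k, (Nat.choose (k + 1) j : ℝ) * μ j *
            (c ^ k / (Nat.factorial (k+1) : ℝ)) := h2
      _ = ∑ j ∈ Finset.range k, c ^ k * μ j /
            ((Nat.factorial j : ℝ) * (Nat.factorial (k + 1 - j) : ℝ)) := by
          apply Finset.sum_congr rfl
          intro j hj
          have hjk : j ≤ k + 1 := by
            have := Finset.mem_range.mp hj; omega
          have hch := Nat.choose_mul_factorial_mul_factorial hjk
          have hchR : (Nat.choose (k+1) j : ℝ) * (Nat.factorial j : ℝ) *
              (Nat.factorial (k+1-j) : ℝ) = (Nat.factorial (k+1) : ℝ) := by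
            exact_mod_cast congrArg (Nat.cast : ℕ → ℝ) hch
          have h1 : (Nat.factorial j : ℝ) ≠ 0 := by positivity
          have h2 : (Nat.factorial (k+1-j) : ℝ) ≠ 0 := by positivity
          have h3 : (Nat.factorial (k+1) : ℝ) ≠ 0 := by positivity
          field_simp
          linear_combination c ^ k * μ j * hchR
  -- key inequality : D * S ≤ D + E * S
  have key : D * S ≤ D + E * S := by
    have hS1 : S = (∑ i ∈ Finset.range m, f (i+1)) + f 0 := by
      rw [hS, Finset.sum_range_succ']
    have hf0 : f 0 = 1 := by simp [hf, h0]
    have hsum : D * (∑ i ∈ Finset.range m, f (i+1)) ≤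
        ∑ i ∈ Finset.range m, ∑ j ∈ Finset.range (i+1),
          c ^ (i+1) * μ j / ((Nat.factorial j : ℝ) * (Nat.factorial (i + 2 - j) : ℝ)) := by
      rw [Finset.mul_sum]
      apply Finset.sum_le_sum
      intro i _
      have := step (i+1) (by omega)
      simpa using this
    have hswap : ∑ i ∈ Finset.range m, ∑ j ∈ Finset.range (i+1),
          c ^ (i+1) * μ j / ((Nat.factorial j : ℝ) * (Nat.factorial (i + 2 - j) : ℝ))
        = ∑ j ∈ Finset.range m, ∑ i ∈ Finset.Ico j m,
          c ^ (i+1) * μ j / ((Nat.factorial j : ℝ) * (Nat.factorial (i + 2 - j) : ℝ)) := by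
      apply Finset.sum_comm'
      intro i j
      simp only [Finset.mem_range, Finset.mem_Ico]
      omega
    have hinner : ∀ j ∈ Finset.range m,
        (∑ i ∈ Finset.Ico j m,
          c ^ (i+1) * μ j / ((Nat.factorial j : ℝ) * (Nat.factorial (i + 2 - j) : ℝ)))
        ≤ E * f j := by
      intro j hj
      rw [Finset.sum_Ico_eq_sum_range]
      have hcalc : ∀ t : ℕ,
          c ^ (j + t + 1) * μ j /
            ((Nat.factorial j : ℝ) * (Nat.factorial (j + t + 2 - j) : ℝ))
          ≤ c * (c ^ t / (Nat.factorial t : ℝ)) * f j := by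
        intro t
        have h1 : j + t + 2 - j = t + 2 := by omega
        rw [h1]
        have hfle : (Nat.factorial t : ℝ) ≤ (Nat.factorial (t+2) : ℝ) := by
          exact_mod_cast Nat.factorial_le (by omega)
        have ht0 : (0:ℝ) < (Nat.factorial t : ℝ) := by positivity
        have ht2 : (0:ℝ) < (Nat.factorial (t+2) : ℝ) := by positivity
        have hj0 : (0:ℝ) < (Nat.factorial j : ℝ) := by positivity
        have hnum : 0 ≤ c ^ (j + t + 1) * μ j := mul_nonneg (pow_nonneg hc _) (hμ j)
        have hmono : c ^ (j + t + 1) * μ j /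
              ((Nat.factorial j : ℝ) * (Nat.factorial (t+2) : ℝ))
            ≤ c ^ (j + t + 1) * μ j /
              ((Nat.factorial j : ℝ) * (Nat.factorial t : ℝ)) := by
          apply div_le_div_of_nonneg_left hnum (by positivity)
          exact mul_le_mul_of_nonneg_left hfle hj0.le
        refine hmono.trans_eq ?_
        rw [hf]
        field_simp
        ring
      calc (∑ t ∈ Finset.range (m - j),
              c ^ (j + t + 1) * μ j /
                ((Nat.factorial j : ℝ) * (Nat.factorial (j + t + 2 - j) : ℝ)))
          ≤ ∑ t ∈ Finset.range (m - j), c * (c ^ t / (Nat.factorial t : ℝ)) * f j :=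
            Finset.sum_le_sum fun t _ => hcalc t
        _ = c * (∑ t ∈ Finset.range (m - j), c ^ t / (Nat.factorial t : ℝ)) * f j := by
            rw [Finset.mul_sum, Finset.sum_mul]
        _ ≤ c * Real.exp c * f j := by
            apply mul_le_mul_of_nonneg_right _ (hfnn j)
            exact mul_le_mul_of_nonneg_left (Real.sum_le_exp_of_nonneg hc _) hc
        _ = E * f j := by rw [hE]
    have hfin : ∑ j ∈ Finset.range m, E * f j ≤ E * S := by
      rw [← Finset.mul_sum]
      apply mul_le_mul_of_nonneg_left _ hEnn
      rw [hS, Finset.sum_range_succ]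
      have := hfnn m
      linarith [Finset.sum_nonneg (fun j (_ : j ∈ Finset.range m) => hfnn j)]
    have : D * (∑ i ∈ Finset.range m, f (i+1)) ≤ E * S := by
      calc D * (∑ i ∈ Finset.range m, f (i+1)) ≤ _ := hsum
        _ = _ := hswap
        _ ≤ ∑ j ∈ Finset.range m, E * f j := Finset.sum_le_sum hinner
        _ ≤ E * S := hfin
    have hSe : D * S = D * (∑ i ∈ Finset.range m, f (i+1)) + D := by
      rw [hS1, hf0]; ring
    linarith
  rw [le_div_iff₀ hEpos]
  nlinarith [key]
end

section
/- For every real c ≥ 0, every m ∈ ℕ, and every sequence (μ_j)_{j≥0} of nonnegative reals: ∑_{k=1}^{m} ∑_{j=0}^{k-1} (c^k μ_j) / (j! * (k+1−j)!) ≤ c * exp(c) * ∑_{j=0}^{m} (c^j μ_j) / j!. -/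
theorem stmt_6 (c : ℝ) (hc : 0 ≤ c) (μ : ℕ → ℝ) (hμ : ∀ j, 0 ≤ μ j) (m : ℕ) :
    ∑ k ∈ Finset.Icc 1 m, ∑ j ∈ Finset.range k,
        c ^ k * μ j / ((Nat.factorial j : ℝ) * (Nat.factorial (k + 1 - j) : ℝ)) ≤
      c * Real.exp c * ∑ j ∈ Finset.range (m + 1), c ^ j * μ j / (Nat.factorial j : ℝ) := by
  have hexp : 0 ≤ Real.exp c := (Real.exp_pos c).le
  calc ∑ k ∈ Finset.Icc 1 m, ∑ j ∈ Finset.range k,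
        c ^ k * μ j / ((Nat.factorial j : ℝ) * (Nat.factorial (k + 1 - j) : ℝ))
      = ∑ j ∈ Finset.range m, ∑ k ∈ Finset.Icc (j + 1) m,
        c ^ k * μ j / ((Nat.factorial j : ℝ) * (Nat.factorial (k + 1 - j) : ℝ)) := by
        apply Finset.sum_comm'
        intro k j
        simp only [Finset.mem_Icc, Finset.mem_range]
        omega
    _ ≤ ∑ j ∈ Finset.range m, c * Real.exp c * (c ^ j * μ j / (Nat.factorial j : ℝ)) := by
        apply Finset.sum_le_sum
        intro j _
        have hμj := hμ j
        have hjf : (0:ℝ) < (Nat.factorial j : ℝ) := by exact_mod_cast Nat.factorial_pos j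
        rw [show Finset.Icc (j + 1) m = Finset.Ico (j + 1) (m + 1) by
          rw [Finset.Ico_add_one_right_eq_Icc], Finset.sum_Ico_eq_sum_range]
        have key : ∀ u ∈ Finset.range (m + 1 - (j + 1)),
            c ^ (j + 1 + u) * μ j /
              ((Nat.factorial j : ℝ) * (Nat.factorial (j + 1 + u + 1 - j) : ℝ)) ≤
            c * (c ^ j * μ j / (Nat.factorial j : ℝ)) * (c ^ u / (Nat.factorial u : ℝ)) := by
          intro u _
          have huf : (0:ℝ) < (Nat.factorial u : ℝ) := by exact_mod_cast Nat.factorial_pos u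
          have h2 : j + 1 + u + 1 - j = u + 2 := by omega
          rw [h2]
          have e1 : c ^ (j + 1 + u) * μ j = c ^ j * c * c ^ u * μ j := by
            rw [pow_add, pow_add, pow_one]
          have e2 : c * (c ^ j * μ j / (Nat.factorial j : ℝ)) * (c ^ u / (Nat.factorial u : ℝ))
              = c ^ j * c * c ^ u * μ j / ((Nat.factorial j : ℝ) * (Nat.factorial u : ℝ)) := by
            field_simp
          rw [e1, e2]
          have hfle : (Nat.factorial u : ℝ) ≤ (Nat.factorial (u + 2) : ℝ) := by
            exact_mod_cast Nat.factorial_le (by omega)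
          gcongr
        calc ∑ u ∈ Finset.range (m + 1 - (j + 1)),
              c ^ (j + 1 + u) * μ j /
                ((Nat.factorial j : ℝ) * (Nat.factorial (j + 1 + u + 1 - j) : ℝ))
            ≤ ∑ u ∈ Finset.range (m + 1 - (j + 1)),
              c * (c ^ j * μ j / (Nat.factorial j : ℝ)) * (c ^ u / (Nat.factorial u : ℝ)) :=
              Finset.sum_le_sum key
          _ = c * (c ^ j * μ j / (Nat.factorial j : ℝ)) *
              ∑ u ∈ Finset.range (m + 1 - (j + 1)), c ^ u / (Nat.factorial u : ℝ) := by
              rw [Finset.mul_sum]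
          _ ≤ c * (c ^ j * μ j / (Nat.factorial j : ℝ)) * Real.exp c := by
              have hnn : 0 ≤ c * (c ^ j * μ j / (Nat.factorial j : ℝ)) := by positivity
              exact mul_le_mul_of_nonneg_left (Real.sum_le_exp_of_nonneg hc _) hnn
          _ = c * Real.exp c * (c ^ j * μ j / (Nat.factorial j : ℝ)) := by ring
    _ ≤ c * Real.exp c * ∑ j ∈ Finset.range (m + 1), c ^ j * μ j / (Nat.factorial j : ℝ) := by
        rw [Finset.mul_sum]
        apply Finset.sum_le_sum_of_subset_of_nonneg
          (Finset.range_subset_range.2 (Nat.le_succ m))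
        intro j _ _
        have := hμ j
        positivity
end

section
/- Let D > 0 and (μ_k)_{k≥0} be nonnegative reals with μ₀ = 1 satisfying D(k+1)μ_k ≤ ∑_{j=0}^{k-1} binomial(k+1,j) μ_j for all k ≥ 1. Let X be a nonnegative integer-valued random variable with E[X^k] = μ_k for all k ≥ 0. Then for every c ≥ 0 with c e^c < D, E[exp(c X)] ≤ D/(D − c e^c) < ∞. -/
open MeasureTheory
open Finset

lemma aux_term_eq (c : ℝ) (k j : ℕ) (hj : j < k) (m : ℝ) :
    ((k + 1).choose j : ℝ) * m * (c ^ k / (k + 1).factorial)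
      = (c ^ j * m / j.factorial) * (c ^ (k - j) / ((k - j) + 1).factorial) := by
  have h1 : ((k + 1).choose j : ℝ) * (j.factorial : ℝ) * (((k - j) + 1).factorial : ℝ)
      = ((k + 1).factorial : ℝ) := by
    have := Nat.choose_mul_factorial_mul_factorial (n := k + 1) (k := j) (by omega)
    have h2 : k + 1 - j = (k - j) + 1 := by omega
    rw [h2] at this
    exact_mod_cast this
  have h3 : c ^ k = c ^ j * c ^ (k - j) := by rw [← pow_add]; congr 1; omega
  have hf1 : (j.factorial : ℝ) ≠ 0 := by positivity
  have hf2 : (((k - j) + 1).factorial : ℝ) ≠ 0 := by positivity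
  have hf3 : (((k + 1)).factorial : ℝ) ≠ 0 := by positivity
  field_simp
  rw [h3]
  linear_combination (c ^ j * c ^ (k - j) * m) * h1

lemma aux_sum_bound (D c : ℝ) (hD : 0 < D) (hc : 0 ≤ c) (hcD : c * Real.exp c < D)
    (μ : ℕ → ℝ) (hμ : ∀ k, 0 ≤ μ k) (h0 : μ 0 = 1)
    (hrec : ∀ k : ℕ, 1 ≤ k →
      D * (k + 1) * μ k ≤ ∑ j ∈ Finset.range k, (Nat.choose (k + 1) j : ℝ) * μ j)
    (m : ℕ) :
    ∑ k ∈ range m, c ^ k * μ k / k.factorial ≤ D / (D - c * Real.exp c) := by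
  set E := c * Real.exp c with hE
  have hE0 : 0 ≤ E := by positivity
  have hDE : 0 < D - E := by linarith
  set t : ℕ → ℝ := fun j => c ^ j * μ j / j.factorial with ht
  have htnn : ∀ j, 0 ≤ t j := fun j => by
    have := hμ j; positivity
  set g : ℕ → ℝ := fun i => c ^ i / (i + 1).factorial with hg
  set S := ∑ k ∈ range m, t k with hS
  have hSnn : 0 ≤ S := Finset.sum_nonneg fun i _ => htnn i
  -- per k inequality
  have hk1 : ∀ k, 1 ≤ k → D * t k ≤ ∑ j ∈ range k, t j * g (k - j) := by
    intro k hk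
    have h := mul_le_mul_of_nonneg_right (hrec k hk)
      (show (0:ℝ) ≤ c ^ k / (k + 1).factorial by positivity)
    calc D * t k = (D * (k + 1) * μ k) * (c ^ k / (k + 1).factorial) := by
          have : ((k+1).factorial : ℝ) = ((k:ℝ)+1) * (k.factorial : ℝ) := by
            push_cast [Nat.factorial_succ]; ring
          rw [this]
          have hf1 : (k.factorial : ℝ) ≠ 0 := by positivity
          have hk0 : ((k:ℝ)+1) ≠ 0 := by positivity
          field_simp [ht]
          simp only [ht]; rw [div_mul_cancel₀ _ hf1]; ring
      _ ≤ (∑ j ∈ range k, ((k + 1).choose j : ℝ) * μ j) * (c ^ k / (k + 1).factorial) := h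
      _ = ∑ j ∈ range k, t j * g (k - j) := by
          rw [Finset.sum_mul]
          refine Finset.sum_congr rfl fun j hj => ?_
          exact aux_term_eq c k j (Finset.mem_range.1 hj) (μ j)
  -- inner geometric-type bound
  have hgsum : ∀ j, ∑ k ∈ range m, (if j < k then g (k - j) else 0) ≤ E := by
    intro j
    have hfilter : (range m).filter (fun k => j < k) = Ico (j+1) m := by
      ext x; simp [Finset.mem_filter, Finset.mem_Ico, Finset.mem_range]
      omega
    rw [← Finset.sum_filter, hfilter, Finset.sum_Ico_eq_sum_range]
    have hidx : ∀ i, j + 1 + i - j = i + 1 := fun i => by omega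
    calc ∑ i ∈ range (m - (j+1)), g (j + 1 + i - j)
        = ∑ i ∈ range (m - (j+1)), g (i+1) := by
          refine Finset.sum_congr rfl fun i _ => by rw [hidx]
      _ ≤ ∑ i ∈ range (m - (j+1)), c ^ (i+1) / (i+1).factorial := by
          refine Finset.sum_le_sum fun i _ => ?_
          simp only [hg]
          apply div_le_div_of_nonneg_left (by positivity) (by positivity)
          exact_mod_cast Nat.factorial_le (by omega)
      _ ≤ Real.exp c - 1 := by
          have h := Real.sum_le_exp_of_nonneg hc (m - (j+1) + 1)
          rw [Finset.sum_range_succ'] at h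
          simp at h
          linarith
      _ ≤ E := by
          have h := Real.add_one_le_exp (-c)
          have h2 : Real.exp (-c) * Real.exp c = 1 := by rw [← Real.exp_add]; simp
          nlinarith [Real.exp_pos c]
  -- main chain
  have main : D * S ≤ D + E * S := by
    calc D * S = ∑ k ∈ range m, D * t k := by rw [hS, Finset.mul_sum]
      _ ≤ ∑ k ∈ range m, ((∑ j ∈ range k, t j * g (k - j)) + if k = 0 then D else 0) := by
          refine Finset.sum_le_sum fun k _ => ?_
          rcases Nat.eq_zero_or_pos k with rfl | hk
          · have ht0 : t 0 = 1 := by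
              show c ^ 0 * μ 0 / (Nat.factorial 0 : ℝ) = 1
              simp [h0]
            simp only [Finset.range_zero, Finset.sum_empty, if_pos rfl, ht0, mul_one, zero_add]
            exact le_refl D
          · rw [if_neg (by omega : k ≠ 0), add_zero]
            exact hk1 k hk
      _ = (∑ k ∈ range m, ∑ j ∈ range k, t j * g (k - j))
            + ∑ k ∈ range m, (if k = 0 then D else 0) := by rw [Finset.sum_add_distrib]
      _ ≤ (∑ k ∈ range m, ∑ j ∈ range k, t j * g (k - j)) + D := by
          gcongr
          rw [Finset.sum_ite_eq' (range m) 0 (fun _ => D)]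
          split <;> linarith
      _ ≤ E * S + D := by
          gcongr
          calc ∑ k ∈ range m, ∑ j ∈ range k, t j * g (k - j)
              = ∑ k ∈ range m, ∑ j ∈ range m, (if j < k then t j * g (k - j) else 0) := by
                refine Finset.sum_congr rfl fun k hk => ?_
                rw [← Finset.sum_filter]
                refine (Finset.sum_congr ?_ fun j _ => rfl).symm
                ext x; simp [Finset.mem_filter, Finset.mem_range]
                intro h; exact lt_trans h (Finset.mem_range.1 hk)
            _ = ∑ j ∈ range m, ∑ k ∈ range m, (if j < k then t j * g (k - j) else 0) :=
                Finset.sum_comm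
            _ ≤ ∑ j ∈ range m, t j * E := by
                refine Finset.sum_le_sum fun j _ => ?_
                have : ∑ k ∈ range m, (if j < k then t j * g (k - j) else 0)
                    = t j * ∑ k ∈ range m, (if j < k then g (k - j) else 0) := by
                  rw [Finset.mul_sum]
                  refine Finset.sum_congr rfl fun k _ => ?_
                  split <;> simp
                rw [this]
                exact mul_le_mul_of_nonneg_left (hgsum j) (htnn j)
            _ = E * S := by rw [hS, Finset.mul_sum]; exact Finset.sum_congr rfl fun j _ => mul_comm _ _
      _ = D + E * S := by ring
  rw [le_div_iff₀ hDE]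
  nlinarith

theorem stmt_19 {Ω : Type*} [MeasurableSpace Ω] (μmeas : Measure Ω) [IsProbabilityMeasure μmeas]
    (D : ℝ) (hD : 0 < D) (μ : ℕ → ℝ) (hμ : ∀ k, 0 ≤ μ k) (h0 : μ 0 = 1)
    (hrec : ∀ k : ℕ, 1 ≤ k →
      D * (k + 1) * μ k ≤ ∑ j ∈ Finset.range k, (Nat.choose (k + 1) j : ℝ) * μ j)
    (X : Ω → ℕ) (hX : Measurable X)
    (hint : ∀ k : ℕ, Integrable (fun ω => ((X ω : ℝ)) ^ k) μmeas)
    (hmom : ∀ k : ℕ, ∫ ω, ((X ω : ℝ)) ^ k ∂μmeas = μ k)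
    (c : ℝ) (hc : 0 ≤ c) (hcD : c * Real.exp c < D) :
    Integrable (fun ω => Real.exp (c * X ω)) μmeas ∧
    ∫ ω, Real.exp (c * X ω) ∂μmeas ≤ D / (D - c * Real.exp c) := by
  have hXr : Measurable fun ω => (X ω : ℝ) := measurable_from_nat.comp hX
  have hfm : Measurable fun ω => Real.exp (c * X ω) :=
    (Real.measurable_exp).comp (measurable_const.mul hXr)
  have hbound_nn : 0 ≤ D / (D - c * Real.exp c) := by
    apply div_nonneg hD.le; linarith
  -- lintegral of each term
  have hterm : ∀ k : ℕ, ∫⁻ ω, ENNReal.ofReal ((c * X ω) ^ k / k.factorial) ∂μmeas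
      = ENNReal.ofReal (c ^ k * μ k / k.factorial) := by
    intro k
    have heq : ∀ ω, (c * (X ω : ℝ)) ^ k / k.factorial
        = (c ^ k / k.factorial) * (X ω : ℝ) ^ k := by
      intro ω; rw [mul_pow]; ring
    simp only [heq]
    have hconst : (0:ℝ) ≤ c ^ k / k.factorial := by positivity
    have hmono : ∀ ω, ENNReal.ofReal ((c ^ k / k.factorial) * (X ω : ℝ) ^ k)
        = ENNReal.ofReal (c ^ k / k.factorial) * ENNReal.ofReal ((X ω : ℝ) ^ k) := by
      intro ω; rw [ENNReal.ofReal_mul hconst]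
    simp only [hmono]
    rw [lintegral_const_mul _ (by
      exact (hXr.pow_const k).ennreal_ofReal)]
    rw [← ofReal_integral_eq_lintegral_ofReal (hint k)
      (Filter.Eventually.of_forall fun ω => by positivity)]
    rw [hmom k, ← ENNReal.ofReal_mul hconst]
    congr 1; ring
  -- lintegral of exp
  have hexp_eq : ∀ ω, ENNReal.ofReal (Real.exp (c * X ω))
      = ∑' k : ℕ, ENNReal.ofReal ((c * X ω) ^ k / k.factorial) := by
    intro ω
    rw [show Real.exp (c * X ω) = ∑' n : ℕ, (c * X ω) ^ n / n.factorial by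
      rw [Real.exp_eq_exp_ℝ, NormedSpace.exp_eq_tsum_div]]
    exact ENNReal.ofReal_tsum_of_nonneg (fun n => by positivity)
      (NormedSpace.expSeries_div_summable (c * X ω))
  have hlint : ∫⁻ ω, ENNReal.ofReal (Real.exp (c * X ω)) ∂μmeas
      ≤ ENNReal.ofReal (D / (D - c * Real.exp c)) := by
    calc ∫⁻ ω, ENNReal.ofReal (Real.exp (c * X ω)) ∂μmeas
        = ∑' k : ℕ, ∫⁻ ω, ENNReal.ofReal ((c * X ω) ^ k / k.factorial) ∂μmeas := by
          simp only [hexp_eq]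
          rw [lintegral_tsum]
          intro k
          exact (((measurable_const.mul hXr).pow_const k).div_const _).ennreal_ofReal.aemeasurable
      _ = ∑' k : ℕ, ENNReal.ofReal (c ^ k * μ k / k.factorial) := by
          exact tsum_congr hterm
      _ ≤ ENNReal.ofReal (D / (D - c * Real.exp c)) := by
          apply ENNReal.tsum_le_of_sum_range_le
          intro n
          rw [← ENNReal.ofReal_sum_of_nonneg (fun i _ => by
            have := hμ i; positivity)]
          exact ENNReal.ofReal_le_ofReal
            (aux_sum_bound D c hD hc hcD μ hμ h0 hrec n)
  have hnn : 0 ≤ᵐ[μmeas] fun ω => Real.exp (c * X ω) :=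
    Filter.Eventually.of_forall fun ω => (Real.exp_pos _).le
  have hintexp : Integrable (fun ω => Real.exp (c * X ω)) μmeas := by
    refine ⟨hfm.aestronglyMeasurable, ?_⟩
    rw [hasFiniteIntegral_iff_ofReal hnn]
    exact lt_of_le_of_lt hlint ENNReal.ofReal_lt_top
  refine ⟨hintexp, ?_⟩
  rw [integral_eq_lintegral_of_nonneg_ae hnn hfm.aestronglyMeasurable]
  calc (∫⁻ ω, ENNReal.ofReal (Real.exp (c * X ω)) ∂μmeas).toReal
      ≤ (ENNReal.ofReal (D / (D - c * Real.exp c))).toReal :=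
        ENNReal.toReal_mono ENNReal.ofReal_ne_top hlint
    _ = D / (D - c * Real.exp c) := ENNReal.toReal_ofReal hbound_nn
end
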